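/- arXiv:1601.03720 — 2 statements merged into one kernel-verified Lean document; each statement's English description precedes it below -/
import Mathlib

section
/- Let ρ_sc be the semicircle distribution on [−2,2] with density (1/2π)√(4−x²), and define γ_j ∈ ℝ by ρ_sc((−∞, γ_j]) = j/n for j = 1,…,n−1, with γ_n = 2. Let ν_n = (1/n)∑_{j=1}^n δ_{γ_j}. Then W_2(ρ_sc, ν_n) ≤ C/n^{2/3} for a universal constant C. -/
open MeasureTheory Real

/-- The 2-Wasserstein distance between measures on ℝ. -/
noncomputable def wassersteinDist (p : ℝ) (μ ν : Measure ℝ) : ℝ :=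
  sInf {r : ℝ | ∃ cpl : Measure (ℝ × ℝ), IsProbabilityMeasure cpl ∧
    cpl.map Prod.fst = μ ∧ cpl.map Prod.snd = ν ∧
    r = (∫ x, dist x.1 x.2 ^ p ∂cpl) ^ (1 / p)}

/-- The semicircle distribution on `[−2,2]`, with density `(1/(2π))√(4 − x²)`. -/
noncomputable def semicircle : Measure ℝ :=
  volume.withDensity fun x =>
    ENNReal.ofReal (Set.indicator (Set.Icc (-2) 2)
      (fun x => (1 / (2 * π)) * Real.sqrt (4 - x ^ 2)) x)

section Aux

/-- The density of the semicircle law. -/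
noncomputable def scDensity : ℝ → ℝ :=
  Set.indicator (Set.Icc (-2) 2) (fun x => (1 / (2 * π)) * Real.sqrt (4 - x ^ 2))

lemma scDensity_nonneg (x : ℝ) : 0 ≤ scDensity x := by
  unfold scDensity
  apply Set.indicator_nonneg
  intro y _
  positivity

lemma scDensity_integrable : Integrable scDensity := by
  have : IntegrableOn (fun x => (1 / (2 * π)) * Real.sqrt (4 - x ^ 2)) (Set.Icc (-2:ℝ) 2) := by
    apply ContinuousOn.integrableOn_compact isCompact_Icc
    fun_prop
  simpa [scDensity, integrable_indicator_iff measurableSet_Icc] using this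

lemma semicircle_eq : semicircle = volume.withDensity (fun x => ENNReal.ofReal (scDensity x)) :=
  rfl

lemma semicircle_apply {s : Set ℝ} (hs : MeasurableSet s) :
    semicircle s = ENNReal.ofReal (∫ x in s, scDensity x) := by
  rw [semicircle_eq, withDensity_apply _ hs,
    ofReal_integral_eq_lintegral_ofReal (scDensity_integrable.integrableOn)
      (Filter.Eventually.of_forall (fun x => scDensity_nonneg x))]

lemma scDensity_eq_zero {x : ℝ} (hx : x ≤ -2 ∨ 2 ≤ x) : scDensity x = 0 := by
  unfold scDensity
  rw [Set.indicator_apply]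
  split
  · next h =>
      have h0 : (4 : ℝ) - x^2 = 0 := by
        simp only [Set.mem_Icc] at h
        rcases hx with hx | hx <;> nlinarith [h.1, h.2]
      simp [h0]
  · rfl

lemma semicircle_Iic_neg_two : semicircle (Set.Iic (-2:ℝ)) = 0 := by
  rw [semicircle_apply measurableSet_Iic]
  have : ∀ x ∈ Set.Iic (-2:ℝ), scDensity x = 0 := fun x hx => scDensity_eq_zero (Or.inl hx)
  rw [setIntegral_congr_fun measurableSet_Iic this]
  simp

lemma semicircle_Ioi_two : semicircle (Set.Ioi (2:ℝ)) = 0 := by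
  rw [semicircle_apply measurableSet_Ioi]
  have : ∀ x ∈ Set.Ioi (2:ℝ), scDensity x = 0 :=
    fun x hx => scDensity_eq_zero (Or.inr (le_of_lt hx))
  rw [setIntegral_congr_fun measurableSet_Ioi this]
  simp

lemma integral_sqrt' {c : ℝ} (hc : 0 ≤ c) :
    ∫ x in (0:ℝ)..c, Real.sqrt x = 2/3 * (c * Real.sqrt c) := by
  rcases eq_or_lt_of_le hc with rfl | hc'
  · simp
  have h1 : ∫ x in (0:ℝ)..c, Real.sqrt x = ∫ x in (0:ℝ)..c, x ^ ((1:ℝ)/2) := by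
    apply intervalIntegral.integral_congr
    intro x hx
    exact Real.sqrt_eq_rpow x
  rw [h1, integral_rpow (Or.inl (by norm_num))]
  rw [Real.zero_rpow (by norm_num)]
  have : c ^ ((1:ℝ)/2 + 1) = c * Real.sqrt c := by
    rw [Real.rpow_add hc', Real.rpow_one, Real.sqrt_eq_rpow, mul_comm]
  rw [this]
  ring

lemma pow23 {t s : ℝ} (ht : 0 ≤ t) (h : t * Real.sqrt t ≤ s) : t ≤ s ^ ((2:ℝ)/3) := by
  have hts : 0 ≤ t * Real.sqrt t := mul_nonneg ht (Real.sqrt_nonneg t)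
  have key : t = (t * Real.sqrt t) ^ ((2:ℝ)/3) := by
    have h32 : t * Real.sqrt t = t ^ ((3:ℝ)/2) := by
      rw [show (3:ℝ)/2 = 1 + 1/2 by norm_num, Real.rpow_add' ht (by norm_num),
        Real.rpow_one, Real.sqrt_eq_rpow]
    rw [h32, ← Real.rpow_mul ht]
    norm_num
  rw [key]
  exact Real.rpow_le_rpow hts h (by norm_num)

lemma seven_pow : (7:ℝ) ^ ((2:ℝ)/3) ≤ 4 := by
  have h : ((7:ℝ) ^ ((2:ℝ)/3)) ^ (3:ℕ) = 49 := by
    rw [← Real.rpow_natCast (_ ^ _) 3, ← Real.rpow_mul (by norm_num : (0:ℝ) ≤ 7)]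
    norm_num
  nlinarith [Real.rpow_nonneg (by norm_num : (0:ℝ) ≤ 7) ((2:ℝ)/3), h,
    sq_nonneg ((7:ℝ) ^ ((2:ℝ)/3) - 4), sq_nonneg ((7:ℝ) ^ ((2:ℝ)/3) + 4)]

lemma mass_lower_right {a b : ℝ} (h0 : 0 ≤ a) (hab : a ≤ b) (hb : b ≤ 2) :
    Real.sqrt 2 / (3*π) * ((b - a) * Real.sqrt (b - a)) ≤ ∫ x in Set.Ioc a b, scDensity x := by
  have hlow : ∀ x ∈ Set.Ioc a b,
      Real.sqrt 2 / (2*π) * Real.sqrt (b - x) ≤ scDensity x := by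
    intro x hx
    obtain ⟨hx1, hx2⟩ := hx
    have hmem : x ∈ Set.Icc (-2:ℝ) 2 := ⟨by linarith, by linarith⟩
    have : scDensity x = (1 / (2 * π)) * Real.sqrt (4 - x ^ 2) :=
      Set.indicator_of_mem hmem _
    rw [this]
    have h1 : Real.sqrt (2 * (b - x)) ≤ Real.sqrt (4 - x ^ 2) := by
      apply Real.sqrt_le_sqrt
      nlinarith
    rw [Real.sqrt_mul (by norm_num : (0:ℝ) ≤ 2)] at h1
    calc Real.sqrt 2 / (2*π) * Real.sqrt (b - x)
        = (1 / (2*π)) * (Real.sqrt 2 * Real.sqrt (b - x)) := by ring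
      _ ≤ (1 / (2*π)) * Real.sqrt (4 - x ^ 2) := by
          apply mul_le_mul_of_nonneg_left h1 (by positivity)
  have hint2 : IntegrableOn (fun x => Real.sqrt 2 / (2*π) * Real.sqrt (b - x)) (Set.Ioc a b) := by
    apply Continuous.integrableOn_Ioc
    fun_prop
  have step : ∫ x in Set.Ioc a b, Real.sqrt 2 / (2*π) * Real.sqrt (b - x)
      ≤ ∫ x in Set.Ioc a b, scDensity x :=
    setIntegral_mono_on hint2 scDensity_integrable.integrableOn measurableSet_Ioc hlow
  refine le_trans (le_of_eq ?_) step
  rw [MeasureTheory.integral_const_mul]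
  rw [← intervalIntegral.integral_of_le hab]
  rw [intervalIntegral.integral_comp_sub_left (fun u => Real.sqrt u) b]
  rw [sub_self, integral_sqrt' (by linarith)]
  field_simp

lemma mass_lower_left {a b : ℝ} (ha : -2 ≤ a) (hab : a ≤ b) (hb0 : b ≤ 0) :
    Real.sqrt 2 / (3*π) * ((b - a) * Real.sqrt (b - a)) ≤ ∫ x in Set.Ioc a b, scDensity x := by
  have hlow : ∀ x ∈ Set.Ioc a b,
      Real.sqrt 2 / (2*π) * Real.sqrt (x - a) ≤ scDensity x := by
    intro x hx
    obtain ⟨hx1, hx2⟩ := hx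
    have hmem : x ∈ Set.Icc (-2:ℝ) 2 := ⟨by linarith, by linarith⟩
    have : scDensity x = (1 / (2 * π)) * Real.sqrt (4 - x ^ 2) :=
      Set.indicator_of_mem hmem _
    rw [this]
    have h1 : Real.sqrt (2 * (x - a)) ≤ Real.sqrt (4 - x ^ 2) := by
      apply Real.sqrt_le_sqrt
      nlinarith
    rw [Real.sqrt_mul (by norm_num : (0:ℝ) ≤ 2)] at h1
    calc Real.sqrt 2 / (2*π) * Real.sqrt (x - a)
        = (1 / (2*π)) * (Real.sqrt 2 * Real.sqrt (x - a)) := by ring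
      _ ≤ (1 / (2*π)) * Real.sqrt (4 - x ^ 2) := by
          apply mul_le_mul_of_nonneg_left h1 (by positivity)
  have hint2 : IntegrableOn (fun x => Real.sqrt 2 / (2*π) * Real.sqrt (x - a)) (Set.Ioc a b) := by
    apply Continuous.integrableOn_Ioc
    fun_prop
  have step : ∫ x in Set.Ioc a b, Real.sqrt 2 / (2*π) * Real.sqrt (x - a)
      ≤ ∫ x in Set.Ioc a b, scDensity x :=
    setIntegral_mono_on hint2 scDensity_integrable.integrableOn measurableSet_Ioc hlow
  refine le_trans (le_of_eq ?_) step
  rw [MeasureTheory.integral_const_mul]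
  rw [← intervalIntegral.integral_of_le hab]
  rw [intervalIntegral.integral_comp_sub_right (fun u => Real.sqrt u) a]
  rw [sub_self, integral_sqrt' (by linarith)]
  field_simp

lemma mass_lower_sub {a b c d : ℝ} (hac : a ≤ c) (hcd : c ≤ d) (hdb : d ≤ b) :
    ∫ x in Set.Ioc c d, scDensity x ≤ ∫ x in Set.Ioc a b, scDensity x := by
  apply setIntegral_mono_set scDensity_integrable.integrableOn
    (Filter.Eventually.of_forall (fun x => scDensity_nonneg x))
    (HasSubset.Subset.eventuallyLE (Set.Ioc_subset_Ioc hac hdb))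

lemma length_bound {a b ε : ℝ} (ha : -2 ≤ a) (hab : a ≤ b) (hb : b ≤ 2) (hε : 0 ≤ ε)
    (hm : ∫ x in Set.Ioc a b, scDensity x ≤ ε) : b - a ≤ 8 * ε ^ ((2:ℝ)/3) := by
  have key : ∀ c d : ℝ, -2 ≤ c → c ≤ d → d ≤ 2 → (0 ≤ c ∨ d ≤ 0) →
      (∫ x in Set.Ioc c d, scDensity x ≤ ε) → d - c ≤ 4 * ε ^ ((2:ℝ)/3) := by
    intro c d hc hcd hd hcase hmass
    have hlow : Real.sqrt 2 / (3*π) * ((d - c) * Real.sqrt (d - c)) ≤ ε := by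
      rcases hcase with h | h
      · exact le_trans (mass_lower_right h hcd hd) hmass
      · exact le_trans (mass_lower_left hc hcd h) hmass
    have h7 : (d - c) * Real.sqrt (d - c) ≤ 7 * ε := by
      have h2 : Real.sqrt 2 ≥ 1.4 := by
        rw [show (1.4:ℝ) = Real.sqrt (1.4^2) by rw [Real.sqrt_sq]; norm_num]
        exact Real.sqrt_le_sqrt (by norm_num)
      have hpi : π ≤ 3.15 := by linarith [pi_lt_d2]
      have : (1:ℝ)/7 * ((d - c) * Real.sqrt (d - c)) ≤ ε := by
        refine le_trans ?_ hlow
        apply mul_le_mul_of_nonneg_right _ (mul_nonneg (by linarith) (Real.sqrt_nonneg _))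
        rw [div_le_div_iff₀ (by norm_num) (by positivity)]
        nlinarith [pi_gt_three]
      linarith
    have := pow23 (by linarith : (0:ℝ) ≤ d - c) h7
    calc d - c ≤ (7*ε) ^ ((2:ℝ)/3) := this
      _ = 7 ^ ((2:ℝ)/3) * ε ^ ((2:ℝ)/3) := Real.mul_rpow (by norm_num) hε
      _ ≤ 4 * ε ^ ((2:ℝ)/3) := by
          apply mul_le_mul_of_nonneg_right seven_pow (Real.rpow_nonneg hε _)
  rcases le_or_gt 0 a with h0a | h0a
  · have := key a b (by linarith) hab hb (Or.inl h0a) hm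
    nlinarith [Real.rpow_nonneg hε ((2:ℝ)/3)]
  rcases le_or_gt b 0 with hb0 | hb0
  · have := key a b ha hab (by linarith) (Or.inr hb0) hm
    nlinarith [Real.rpow_nonneg hε ((2:ℝ)/3)]
  · have h1 := key 0 b (by norm_num) (le_of_lt hb0) hb (Or.inl le_rfl)
      (le_trans (mass_lower_sub (le_of_lt h0a) (le_of_lt hb0) le_rfl) hm)
    have h2 := key a 0 ha (le_of_lt h0a) (by norm_num) (Or.inr le_rfl)
      (le_trans (mass_lower_sub le_rfl (le_of_lt h0a) (le_of_lt hb0)) hm)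
    linarith

lemma map_finset_sum' {α β : Type*} [MeasurableSpace α] [MeasurableSpace β]
    {ι : Type*} (s : Finset ι) (μ : ι → Measure α) {f : α → β} (hf : Measurable f) :
    (∑ i ∈ s, μ i).map f = ∑ i ∈ s, (μ i).map f := by
  classical
  induction s using Finset.induction_on with
  | empty => simp [Measure.map_zero]
  | insert _ _ h ih =>
      rw [Finset.sum_insert h, Finset.sum_insert h, Measure.map_add _ _ hf, ih]

end Aux

/-- If `γ_j` are the `n`-quantiles of the semicircle law (with `γ_n = 2`) and
`ν_n = (1/n) ∑ δ_{γ_j}`, then `W₂(ρ_sc, ν_n) ≤ C / n^{2/3}` for a universal constant. -/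
theorem wasserstein_semicircle_quantiles :
    ∃ C : ℝ, 0 < C ∧ ∀ (n : ℕ), 0 < n → ∀ γ : Fin n → ℝ,
      (∀ j : Fin n, semicircle (Set.Iic (γ j)) = ENNReal.ofReal (((j : ℕ) + 1) / n)) →
      (∀ j : Fin n, (j : ℕ) = n - 1 → γ j = 2) →
      wassersteinDist 2 semicircle ((n : ENNReal)⁻¹ • ∑ j : Fin n, Measure.dirac (γ j)) ≤
        C / (n : ℝ) ^ ((2 : ℝ) / 3) := by
  refine ⟨8, by norm_num, ?_⟩
  intro n hn γ hq h2
  have hn0 : (n:ℝ) ≠ 0 := Nat.cast_ne_zero.mpr hn.ne'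
  have hnpos : (0:ℝ) < n := Nat.cast_pos.mpr hn
  -- extended quantile sequence
  set F : ℕ → ℝ := fun k => if h : 0 < k ∧ k ≤ n then γ ⟨k-1, by omega⟩ else -2 with hFdef
  have hF0 : F 0 = -2 := by simp [hFdef]
  have hFγ : ∀ j : Fin n, F (j.val + 1) = γ j := by
    intro j
    have h : 0 < j.val + 1 ∧ j.val + 1 ≤ n := ⟨Nat.succ_pos _, j.isLt⟩
    simp only [hFdef, dif_pos h, Nat.add_sub_cancel]
  have hF : ∀ k, k ≤ n → semicircle (Set.Iic (F k)) = ENNReal.ofReal (k / n) := by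
    intro k hk
    rcases Nat.eq_zero_or_pos k with rfl | hkpos
    · rw [hF0, semicircle_Iic_neg_two]
      simp
    · obtain ⟨m, rfl⟩ := Nat.exists_eq_add_of_lt hkpos  -- k = 0 + m + 1
      have hm : m < n := by omega
      have := hq ⟨m, hm⟩
      rw [← hFγ ⟨m, hm⟩] at this
      simp only [zero_add] at this ⊢
      rw [this]
      norm_num
  have hFn : F n = 2 := by
    have hlt : n - 1 < n := by omega
    have := h2 ⟨n-1, hlt⟩ rfl
    have hn1 : n - 1 + 1 = n := by omega
    rw [← hFγ ⟨n-1, hlt⟩, hn1] at this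
    exact this
  have hFmono : ∀ k l, k < l → l ≤ n → F k < F l := by
    intro k l hkl hl
    by_contra hcon
    push_neg at hcon
    have hsub : Set.Iic (F l) ⊆ Set.Iic (F k) := Set.Iic_subset_Iic.mpr hcon
    have := measure_mono (μ := semicircle) hsub
    rw [hF k (by omega), hF l hl] at this
    rw [ENNReal.ofReal_le_ofReal_iff (by positivity)] at this
    have hlt : (k:ℝ)/n < (l:ℝ)/n := by
      have : (k:ℝ) < l := by exact_mod_cast hkl
      gcongr
    linarith
  have hFmono' : ∀ k l, k ≤ l → l ≤ n → F k ≤ F l := by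
    intro k l hkl hl
    rcases eq_or_lt_of_le hkl with rfl | h
    · exact le_rfl
    · exact (hFmono k l h hl).le
  have hFlb : ∀ k, k ≤ n → -2 ≤ F k := fun k hk => hF0 ▸ hFmono' 0 k (Nat.zero_le _) hk
  have hFub : ∀ k, k ≤ n → F k ≤ 2 := fun k hk => hFn ▸ hFmono' k n hk le_rfl
  set I : Fin n → Set ℝ := fun j => Set.Ioc (F j.val) (F (j.val+1)) with hIdef
  have hImeas : ∀ j, MeasurableSet (I j) := fun j => measurableSet_Ioc
  have hIdisj : Pairwise (Function.onFun Disjoint I) := by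
    have key : ∀ i j : Fin n, i < j → Disjoint (I i) (I j) := by
      intro i j hij
      apply Set.disjoint_left.mpr
      intro x hxi hxj
      have h1 : x ≤ F (i.val+1) := hxi.2
      have h2 : F (j.val) < x := hxj.1
      have h3 : F (i.val+1) ≤ F j.val := hFmono' _ _ (by omega) (le_of_lt j.isLt)
      linarith
    intro i j hij
    rcases lt_or_gt_of_ne hij with h | h
    · exact key i j h
    · exact (key j i h).symm
  have hmass : ∀ j : Fin n, semicircle (I j) = ENNReal.ofReal (1/(n:ℝ)) := by
    intro j
    have hle : F j.val ≤ F (j.val+1) := hFmono' _ _ (Nat.le_succ _) j.isLt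
    have hsplit : Set.Iic (F (j.val+1))
        = Set.Iic (F j.val) ∪ Set.Ioc (F j.val) (F (j.val+1)) :=
      (Set.Iic_union_Ioc_eq_Iic hle).symm
    have hdis : Disjoint (Set.Iic (F j.val)) (Set.Ioc (F j.val) (F (j.val+1))) := by
      apply Set.disjoint_left.mpr
      intro x hx1 hx2
      exact absurd hx2.1 (not_lt.mpr hx1)
    have hun := measure_union (μ := semicircle) hdis measurableSet_Ioc
    rw [← hsplit, hF _ j.isLt, hF _ (le_of_lt j.isLt)] at hun
    have hadd : ENNReal.ofReal ((j.val:ℝ)/n) + ENNReal.ofReal (1/(n:ℝ))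
        = ENNReal.ofReal (((j.val:ℝ)+1)/n) := by
      rw [← ENNReal.ofReal_add (by positivity) (by positivity), ← add_div]
    rw [show ((j.val+1 : ℕ):ℝ) = (j.val:ℝ)+1 by push_cast; ring, ← hadd] at hun
    exact ((ENNReal.add_right_inj ENNReal.ofReal_ne_top).mp hun).symm
  have hsum1 : ∑ _j : Fin n, ENNReal.ofReal ((1:ℝ)/n) = 1 := by
    rw [Finset.sum_const, Finset.card_univ, Fintype.card_fin, nsmul_eq_mul,
      ← ENNReal.ofReal_natCast, ← ENNReal.ofReal_mul (Nat.cast_nonneg n),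
      mul_one_div, div_self hn0, ENNReal.ofReal_one]
  have huniv : semicircle Set.univ = 1 := by
    have hu : (Set.univ : Set ℝ) = Set.Iic (2:ℝ) ∪ Set.Ioi 2 := (Set.Iic_union_Ioi).symm
    have hd : Disjoint (Set.Iic (2:ℝ)) (Set.Ioi (2:ℝ)) := by
      apply Set.disjoint_left.mpr
      intro x hx1 hx2
      simp only [Set.mem_Iic] at hx1
      simp only [Set.mem_Ioi] at hx2
      linarith
    rw [hu, measure_union hd measurableSet_Ioi, semicircle_Ioi_two, add_zero,
      ← hFn, hF n le_rfl, div_self hn0, ENNReal.ofReal_one]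
  haveI hPsc : IsProbabilityMeasure semicircle := ⟨huniv⟩
  have hsU : semicircle (⋃ j, I j) = 1 := by
    rw [measure_iUnion hIdisj hImeas, tsum_fintype]
    simp_rw [hmass]
    exact hsum1
  have hcompl : semicircle (⋃ j, I j)ᶜ = 0 := by
    have h := measure_compl (μ := semicircle) (MeasurableSet.iUnion hImeas) (measure_ne_top semicircle _)
    rw [hsU, huniv, tsub_self] at h
    exact h
  have hrestrict : semicircle.restrict (⋃ j, I j) = semicircle :=
    Measure.restrict_eq_self_of_ae_mem (mem_ae_iff.mpr hcompl)
  have hpairmeas : ∀ j : Fin n, Measurable (fun x : ℝ => (x, γ j)) :=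
    fun j => measurable_id.prodMk measurable_const
  set cpl : Measure (ℝ × ℝ) :=
    ∑ j : Fin n, Measure.map (fun x : ℝ => (x, γ j)) (semicircle.restrict (I j)) with hcpldef
  have hIunivmass : ∀ j : Fin n, (semicircle.restrict (I j)) Set.univ = ENNReal.ofReal (1/(n:ℝ)) := by
    intro j
    rw [Measure.restrict_apply_univ]
    exact hmass j
  have hinv : ENNReal.ofReal ((1:ℝ)/n) = (n:ENNReal)⁻¹ := by
    rw [one_div, ENNReal.ofReal_inv_of_pos hnpos, ENNReal.ofReal_natCast]
  have hfst : cpl.map Prod.fst = semicircle := by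
    rw [hcpldef, map_finset_sum' _ _ measurable_fst]
    have heach : ∀ j : Fin n,
        (Measure.map (fun x : ℝ => (x, γ j)) (semicircle.restrict (I j))).map Prod.fst
          = semicircle.restrict (I j) := by
      intro j
      rw [Measure.map_map measurable_fst (hpairmeas j)]
      have : (Prod.fst ∘ fun x : ℝ => (x, γ j)) = id := rfl
      rw [this, Measure.map_id]
    simp_rw [heach]
    rw [← Measure.sum_fintype, ← Measure.restrict_iUnion hIdisj hImeas, hrestrict]
  have hsnd : cpl.map Prod.snd = (n : ENNReal)⁻¹ • ∑ j : Fin n, Measure.dirac (γ j) := by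
    rw [hcpldef, map_finset_sum' _ _ measurable_snd]
    have heach : ∀ j : Fin n,
        (Measure.map (fun x : ℝ => (x, γ j)) (semicircle.restrict (I j))).map Prod.snd
          = (n : ENNReal)⁻¹ • Measure.dirac (γ j) := by
      intro j
      rw [Measure.map_map measurable_snd (hpairmeas j)]
      have hc : (Prod.snd ∘ fun x : ℝ => (x, γ j)) = fun _ => γ j := rfl
      rw [hc, Measure.map_const, hIunivmass j, hinv]
    simp_rw [heach]
    rw [← Finset.smul_sum]
  have hprob : IsProbabilityMeasure cpl := by
    constructor
    rw [hcpldef, Measure.finset_sum_apply]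
    have heach : ∀ j : Fin n,
        (Measure.map (fun x : ℝ => (x, γ j)) (semicircle.restrict (I j))) Set.univ
          = ENNReal.ofReal (1/(n:ℝ)) := by
      intro j
      rw [Measure.map_apply (hpairmeas j) MeasurableSet.univ, Set.preimage_univ, hIunivmass j]
    simp_rw [heach]
    exact hsum1
  -- the cost estimate
  set g : ℝ × ℝ → ℝ := fun x => dist x.1 x.2 ^ (2:ℕ) with hgdef
  have hgcont : Continuous g := (continuous_fst.dist continuous_snd).pow 2
  have hgrpow : (fun x : ℝ × ℝ => dist x.1 x.2 ^ (2:ℝ)) = g := by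
    funext x
    rw [hgdef, show (2:ℝ) = ((2:ℕ):ℝ) by norm_num, Real.rpow_natCast]
  set Δ : ℝ := 8 * ((1:ℝ)/n) ^ ((2:ℝ)/3) with hΔdef
  have hΔ0 : 0 ≤ Δ := by positivity
  have hlen : ∀ j : Fin n, F (j.val+1) - F j.val ≤ Δ := by
    intro j
    have hmassr : ∫ x in I j, scDensity x ≤ 1/(n:ℝ) := by
      have h := hmass j
      rw [semicircle_apply (hImeas j)] at h
      have h0 : 0 ≤ ∫ x in I j, scDensity x :=
        setIntegral_nonneg (hImeas j) (fun x _ => scDensity_nonneg x)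
      exact le_of_eq ((ENNReal.ofReal_eq_ofReal_iff h0 (by positivity)).mp h)
    exact length_bound (hFlb _ (le_of_lt j.isLt)) (hFmono' _ _ (Nat.le_succ _) j.isLt)
      (hFub _ j.isLt) (by positivity) hmassr
  have hbound : ∀ j : Fin n, ∀ᵐ x ∂(semicircle.restrict (I j)), ‖g (x, γ j)‖ ≤ Δ^2 := by
    intro j
    rw [ae_restrict_iff' (hImeas j)]
    apply Filter.Eventually.of_forall
    intro x hx
    have hd : dist x (γ j) ≤ Δ := by
      have hx' : x ∈ Set.Ioc (F j.val) (F (j.val+1)) := hx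
      have hγ : γ j = F (j.val+1) := (hFγ j).symm
      have hL := hlen j
      rw [Real.dist_eq, abs_le, hγ]
      exact ⟨by linarith [hx'.1, hx'.2], by linarith [hx'.1, hx'.2]⟩
    have hnn : (0:ℝ) ≤ dist x (γ j) ^ 2 := by positivity
    rw [hgdef]
    simp only [Real.norm_eq_abs, abs_of_nonneg hnn]
    exact pow_le_pow_left₀ dist_nonneg hd 2
  have hintg : ∀ j : Fin n,
      Integrable g (Measure.map (fun x : ℝ => (x, γ j)) (semicircle.restrict (I j))) := by
    intro j
    rw [integrable_map_measure hgcont.aestronglyMeasurable (hpairmeas j).aemeasurable]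
    refine Integrable.mono' (integrable_const (Δ^2))
      ((hgcont.comp (continuous_id.prodMk continuous_const)).aestronglyMeasurable) ?_
    exact hbound j
  have hvalue : ∀ j : Fin n,
      ∫ x, g x ∂(Measure.map (fun x : ℝ => (x, γ j)) (semicircle.restrict (I j)))
        ≤ Δ^2 * (1/(n:ℝ)) := by
    intro j
    rw [integral_map (hpairmeas j).aemeasurable hgcont.aestronglyMeasurable]
    have h := norm_integral_le_of_norm_le_const (μ := semicircle.restrict (I j)) (hbound j)
    rw [measureReal_def, hIunivmass j, ENNReal.toReal_ofReal (by positivity)] at h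
    calc ∫ x, g (x, γ j) ∂(semicircle.restrict (I j))
        ≤ ‖∫ x, g (x, γ j) ∂(semicircle.restrict (I j))‖ := le_abs_self _
      _ ≤ Δ^2 * (1/(n:ℝ)) := h
  have hcost : ∫ x, g x ∂cpl ≤ Δ^2 := by
    rw [hcpldef, integral_finset_sum_measure (fun j _ => hintg j)]
    calc ∑ j : Fin n, ∫ x, g x ∂(Measure.map (fun x : ℝ => (x, γ j)) (semicircle.restrict (I j)))
        ≤ ∑ _j : Fin n, Δ^2 * (1/(n:ℝ)) := Finset.sum_le_sum (fun j _ => hvalue j)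
      _ = n * (Δ^2 * (1/(n:ℝ))) := by
          rw [Finset.sum_const, Finset.card_univ, Fintype.card_fin, nsmul_eq_mul]
      _ = Δ^2 := by field_simp
  -- conclusion
  unfold wassersteinDist
  have hbdd : BddBelow {r : ℝ | ∃ cpl : Measure (ℝ × ℝ), IsProbabilityMeasure cpl ∧
      cpl.map Prod.fst = semicircle ∧
      cpl.map Prod.snd = (n : ENNReal)⁻¹ • ∑ j : Fin n, Measure.dirac (γ j) ∧
      r = (∫ x, dist x.1 x.2 ^ (2:ℝ) ∂cpl) ^ (1/(2:ℝ))} := by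
    refine ⟨0, fun r hr => ?_⟩
    obtain ⟨c, _, _, _, rfl⟩ := hr
    exact Real.rpow_nonneg (integral_nonneg (fun x => Real.rpow_nonneg dist_nonneg _)) _
  refine le_trans (csInf_le hbdd ⟨cpl, hprob, hfst, hsnd, rfl⟩) ?_
  rw [hgrpow]
  have hI0 : 0 ≤ ∫ x, g x ∂cpl := integral_nonneg (fun x => by rw [hgdef]; positivity)
  calc (∫ x, g x ∂cpl) ^ ((1:ℝ)/2)
      ≤ (Δ^2) ^ ((1:ℝ)/2) := Real.rpow_le_rpow hI0 hcost (by norm_num)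
    _ = Δ := by rw [← Real.sqrt_eq_rpow, Real.sqrt_sq hΔ0]
    _ = 8 / (n:ℝ) ^ ((2:ℝ)/3) := by
        rw [hΔdef, Real.div_rpow (by norm_num) (Nat.cast_nonneg n), Real.one_rpow, mul_one_div]
end

section
/- Let A be a fixed n×n Hermitian matrix with operator norm ‖A‖_op, let f : ℝ → ℝ be 1-Lipschitz, and for U unitary let μ_U denote the spectral measure of UAU* + B (B a fixed Hermitian matrix). Then the map U ↦ ∫ f dμ_U is (2‖A‖_op/√n)-Lipschitz on the unitary group U(n) with respect to the Hilbert–Schmidt distance. -/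
set_option maxHeartbeats 1000000
set_option synthInstance.maxHeartbeats 200000

open Matrix

/-- The Hilbert–Schmidt (Frobenius) norm of a matrix. -/
noncomputable def hsNorm {n : ℕ} (A : Matrix (Fin n) (Fin n) ℂ) : ℝ :=
  Real.sqrt (∑ i, ∑ j, ‖A i j‖ ^ 2)

/-- The operator (spectral) norm of a square matrix, with respect to Euclidean norms. -/
noncomputable def opNorm {n : ℕ} (A : Matrix (Fin n) (Fin n) ℂ) : ℝ :=
  sSup {r : ℝ | ∃ v : Fin n → ℂ, (∑ j, ‖v j‖ ^ 2) ≤ 1 ∧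
    r = Real.sqrt (∑ i, ‖A.mulVec v i‖ ^ 2)}

namespace HWAux

variable {n : ℕ}

lemma euc_norm_eq (x : EuclideanSpace ℂ (Fin n)) :
    ‖x‖ = Real.sqrt (∑ i, ‖x i‖ ^ 2) := by
  rw [EuclideanSpace.norm_eq]

lemma clm_apply_coord (A : Matrix (Fin n) (Fin n) ℂ) (x : EuclideanSpace ℂ (Fin n)) (i : Fin n) :
    (toEuclideanCLM (𝕜 := ℂ) A x) i = A.mulVec (WithLp.equiv 2 _ x) i := rfl

lemma clm_norm (A : Matrix (Fin n) (Fin n) ℂ) (x : EuclideanSpace ℂ (Fin n)) :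
    ‖toEuclideanCLM (𝕜 := ℂ) A x‖ =
      Real.sqrt (∑ i, ‖A.mulVec (WithLp.equiv 2 _ x) i‖ ^ 2) := by
  rw [euc_norm_eq]
  simp only [clm_apply_coord]

lemma opNorm_eq (A : Matrix (Fin n) (Fin n) ℂ) :
    opNorm A = ‖toEuclideanCLM (𝕜 := ℂ) A‖ := by
  rw [← ContinuousLinearMap.sSup_unitClosedBall_eq_norm]
  unfold opNorm
  congr 1
  ext r
  constructor
  · rintro ⟨v, hv, rfl⟩
    refine ⟨(WithLp.equiv 2 _).symm v, ?_, ?_⟩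
    · rw [Metric.mem_closedBall, dist_zero_right, euc_norm_eq]
      exact Real.sqrt_le_one.mpr (by simpa using hv)
    · have := clm_norm A ((WithLp.equiv 2 _).symm v)
      simp only [Equiv.apply_symm_apply] at this
      simpa using this
  · rintro ⟨x, hx, rfl⟩
    refine ⟨WithLp.equiv 2 _ x, ?_, ?_⟩
    · rw [Metric.mem_closedBall, dist_zero_right, euc_norm_eq] at hx
      have := Real.sqrt_le_one.mp hx
      simpa using this
    · simpa using clm_norm A x


lemma opNorm_nonneg (A : Matrix (Fin n) (Fin n) ℂ) : 0 ≤ opNorm A := by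
  rw [opNorm_eq]; exact norm_nonneg _

lemma opNorm_conjTranspose (A : Matrix (Fin n) (Fin n) ℂ) : opNorm Aᴴ = opNorm A := by
  rw [opNorm_eq, opNorm_eq]
  have h : toEuclideanCLM (𝕜 := ℂ) Aᴴ =
      ContinuousLinearMap.adjoint (toEuclideanCLM (𝕜 := ℂ) A) := by
    rw [← Matrix.star_eq_conjTranspose, map_star, ContinuousLinearMap.star_eq_adjoint]
  rw [h]
  exact ContinuousLinearMap.adjoint.norm_map _

lemma opNorm_unitary_le {U : Matrix (Fin n) (Fin n) ℂ}
    (hU : U ∈ Matrix.unitaryGroup (Fin n) ℂ) : opNorm U ≤ 1 := by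
  rw [opNorm_eq]
  set T := toEuclideanCLM (𝕜 := ℂ) U with hT
  have h1 : star T * T = 1 := by
    rw [← map_star, ← _root_.map_mul, Matrix.mem_unitaryGroup_iff'.mp hU, _root_.map_one]
  refine ContinuousLinearMap.opNorm_le_bound _ zero_le_one fun x => ?_
  have hadj : (ContinuousLinearMap.adjoint T) (T x) = x := by
    rw [← ContinuousLinearMap.star_eq_adjoint]
    have := congrFun (congrArg DFunLike.coe h1) x
    simpa using this
  have hin : (inner ℂ (T x) (T x) : ℂ) = inner ℂ x x := by
    rw [← ContinuousLinearMap.adjoint_inner_left, hadj]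
  have h3 : ‖T x‖ ^ 2 = ‖x‖ ^ 2 := by
    rw [inner_self_eq_norm_sq_to_K, inner_self_eq_norm_sq_to_K] at hin
    exact_mod_cast hin
  rw [one_mul]
  nlinarith [norm_nonneg (T x), norm_nonneg x]

/-- Squared Frobenius norm. -/
noncomputable def sqF (A : Matrix (Fin n) (Fin n) ℂ) : ℝ :=
  ∑ i, ∑ j, ‖A i j‖ ^ 2

lemma sqF_nonneg (A : Matrix (Fin n) (Fin n) ℂ) : 0 ≤ sqF A :=
  Finset.sum_nonneg fun i _ => Finset.sum_nonneg fun j _ => by positivity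

lemma hsNorm_eq (A : Matrix (Fin n) (Fin n) ℂ) : hsNorm A = Real.sqrt (sqF A) := rfl

lemma mulVec_sq_sum_le (A : Matrix (Fin n) (Fin n) ℂ) (v : Fin n → ℂ) :
    ∑ i, ‖A.mulVec v i‖ ^ 2 ≤ opNorm A ^ 2 * ∑ j, ‖v j‖ ^ 2 := by
  have h := (toEuclideanCLM (𝕜 := ℂ) A).le_opNorm ((WithLp.equiv 2 _).symm v)
  rw [clm_norm, ← opNorm_eq] at h
  simp only [Equiv.apply_symm_apply] at h
  have hx : ‖(WithLp.equiv 2 (Fin n → ℂ)).symm v‖ = Real.sqrt (∑ j, ‖v j‖ ^ 2) := by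
    rw [euc_norm_eq]; rfl
  rw [hx] at h
  have h1 : (0:ℝ) ≤ ∑ i, ‖A.mulVec v i‖ ^ 2 :=
    Finset.sum_nonneg fun i _ => by positivity
  have h2 : (0:ℝ) ≤ ∑ j, ‖v j‖ ^ 2 :=
    Finset.sum_nonneg fun j _ => by positivity
  have := mul_self_le_mul_self (Real.sqrt_nonneg _) h
  rw [Real.mul_self_sqrt h1] at this
  calc ∑ i, ‖A.mulVec v i‖ ^ 2
      ≤ (opNorm A * Real.sqrt (∑ j, ‖v j‖ ^ 2)) *
        (opNorm A * Real.sqrt (∑ j, ‖v j‖ ^ 2)) := this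
    _ = opNorm A ^ 2 * ∑ j, ‖v j‖ ^ 2 := by
        rw [mul_mul_mul_comm, Real.mul_self_sqrt h2]; ring

lemma sqF_mul_le (M N : Matrix (Fin n) (Fin n) ℂ) :
    sqF (M * N) ≤ opNorm M ^ 2 * sqF N := by
  unfold sqF
  rw [Finset.sum_comm, Finset.sum_comm (s := Finset.univ) (t := Finset.univ)
    (f := fun i j => ‖N i j‖ ^ 2), Finset.mul_sum]
  apply Finset.sum_le_sum
  intro j _
  have : ∀ i, (M * N) i j = M.mulVec (fun k => N k j) i := by
    intro i; simp [Matrix.mul_apply, Matrix.mulVec, dotProduct]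
  calc ∑ i, ‖(M * N) i j‖ ^ 2
      = ∑ i, ‖M.mulVec (fun k => N k j) i‖ ^ 2 := by
        apply Finset.sum_congr rfl; intro i _; rw [this i]
    _ ≤ opNorm M ^ 2 * ∑ k, ‖N k j‖ ^ 2 := mulVec_sq_sum_le M _

lemma sqF_conjTranspose (A : Matrix (Fin n) (Fin n) ℂ) : sqF Aᴴ = sqF A := by
  unfold sqF
  rw [Finset.sum_comm]
  apply Finset.sum_congr rfl; intro i _
  apply Finset.sum_congr rfl; intro j _
  simp [Matrix.conjTranspose_apply]

lemma hsNorm_nonneg (A : Matrix (Fin n) (Fin n) ℂ) : 0 ≤ hsNorm A := Real.sqrt_nonneg _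

lemma hsNorm_mul_le_left (M N : Matrix (Fin n) (Fin n) ℂ) :
    hsNorm (M * N) ≤ opNorm M * hsNorm N := by
  rw [hsNorm_eq, hsNorm_eq]
  calc Real.sqrt (sqF (M * N)) ≤ Real.sqrt (opNorm M ^ 2 * sqF N) :=
        Real.sqrt_le_sqrt (sqF_mul_le M N)
    _ = opNorm M * Real.sqrt (sqF N) := by
        rw [Real.sqrt_mul (by positivity), Real.sqrt_sq (opNorm_nonneg M)]

lemma hsNorm_conjTranspose (A : Matrix (Fin n) (Fin n) ℂ) : hsNorm Aᴴ = hsNorm A := by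
  rw [hsNorm_eq, hsNorm_eq, sqF_conjTranspose]

lemma hsNorm_mul_le_right (M N : Matrix (Fin n) (Fin n) ℂ) :
    hsNorm (M * N) ≤ hsNorm M * opNorm N := by
  have := hsNorm_mul_le_left Nᴴ Mᴴ
  rw [← Matrix.conjTranspose_mul, hsNorm_conjTranspose, hsNorm_conjTranspose,
    opNorm_conjTranspose] at this
  linarith

lemma hsNorm_eq_euc (Z : Matrix (Fin n) (Fin n) ℂ) :
    hsNorm Z = ‖(WithLp.equiv 2 (Fin n × Fin n → ℂ)).symm (fun p => Z p.1 p.2)‖ := by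
  rw [EuclideanSpace.norm_eq]
  unfold hsNorm
  congr 1
  rw [Fintype.sum_prod_type]
  rfl

lemma hsNorm_add_le (X Y : Matrix (Fin n) (Fin n) ℂ) :
    hsNorm (X + Y) ≤ hsNorm X + hsNorm Y := by
  rw [hsNorm_eq_euc, hsNorm_eq_euc, hsNorm_eq_euc]
  have : (WithLp.equiv 2 (Fin n × Fin n → ℂ)).symm (fun p => (X + Y) p.1 p.2) =
      (WithLp.equiv 2 (Fin n × Fin n → ℂ)).symm (fun p => X p.1 p.2) +
      (WithLp.equiv 2 (Fin n × Fin n → ℂ)).symm (fun p => Y p.1 p.2) := rfl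
  rw [this]
  exact norm_add_le _ _
lemma trace_eq_sqF (X : Matrix (Fin n) (Fin n) ℂ) :
    Matrix.trace (Xᴴ * X) = ((sqF X : ℝ) : ℂ) := by
  unfold sqF Matrix.trace
  push_cast
  rw [Finset.sum_comm]
  apply Finset.sum_congr rfl
  intro j _
  rw [Matrix.diag_apply, Matrix.mul_apply]
  apply Finset.sum_congr rfl
  intro i _
  rw [Matrix.conjTranspose_apply, Complex.star_def,
    ← Complex.normSq_eq_conj_mul_self, ← Complex.sq_norm]
  norm_cast

lemma sqF_unitary_conj {P Q : Matrix (Fin n) (Fin n) ℂ} (X : Matrix (Fin n) (Fin n) ℂ)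
    (hP : P ∈ Matrix.unitaryGroup (Fin n) ℂ) (hQ : Q ∈ Matrix.unitaryGroup (Fin n) ℂ) :
    sqF (Pᴴ * X * Q) = sqF X := by
  have hPP : P * Pᴴ = 1 := by
    rw [← Matrix.star_eq_conjTranspose]; exact Matrix.mem_unitaryGroup_iff.mp hP
  have hQQ : Q * Qᴴ = 1 := by
    rw [← Matrix.star_eq_conjTranspose]; exact Matrix.mem_unitaryGroup_iff.mp hQ
  have key : (Pᴴ * X * Q)ᴴ * (Pᴴ * X * Q) = Qᴴ * (Xᴴ * X) * Q := by
    rw [Matrix.conjTranspose_mul, Matrix.conjTranspose_mul, Matrix.conjTranspose_conjTranspose]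
    simp only [Matrix.mul_assoc]
    congr 2
    rw [← Matrix.mul_assoc P, hPP, Matrix.one_mul]
  have h1 : ((sqF (Pᴴ * X * Q) : ℝ) : ℂ) = ((sqF X : ℝ) : ℂ) := by
    rw [← trace_eq_sqF, ← trace_eq_sqF, key, Matrix.trace_mul_comm,
      ← Matrix.mul_assoc, ← Matrix.mul_assoc, hQQ, Matrix.one_mul]
  exact_mod_cast h1

lemma hoffman_wielandt (M N : Matrix (Fin n) (Fin n) ℂ)
    (hM : M.IsHermitian) (hN : N.IsHermitian) :
    ∃ σ : Equiv.Perm (Fin n),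
      ∑ i, (hM.eigenvalues i - hN.eigenvalues (σ i)) ^ 2 ≤ sqF (M - N) := by
  classical
  set P : Matrix (Fin n) (Fin n) ℂ := (hM.eigenvectorUnitary : Matrix (Fin n) (Fin n) ℂ) with hPdef
  set Q : Matrix (Fin n) (Fin n) ℂ := (hN.eigenvectorUnitary : Matrix (Fin n) (Fin n) ℂ) with hQdef
  have hP : P ∈ Matrix.unitaryGroup (Fin n) ℂ := (hM.eigenvectorUnitary).2
  have hQ : Q ∈ Matrix.unitaryGroup (Fin n) ℂ := (hN.eigenvectorUnitary).2
  set α := hM.eigenvalues with hα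
  set β := hN.eigenvalues with hβ
  set S : Matrix (Fin n) (Fin n) ℂ := Pᴴ * Q with hSdef
  have hPP : P * Pᴴ = 1 := by
    rw [← Matrix.star_eq_conjTranspose]; exact Matrix.mem_unitaryGroup_iff.mp hP
  have hQQ : Q * Qᴴ = 1 := by
    rw [← Matrix.star_eq_conjTranspose]; exact Matrix.mem_unitaryGroup_iff.mp hQ
  have hPP' : Pᴴ * P = 1 := by
    rw [← Matrix.star_eq_conjTranspose]; exact Matrix.mem_unitaryGroup_iff'.mp hP
  have hQQ' : Qᴴ * Q = 1 := by
    rw [← Matrix.star_eq_conjTranspose]; exact Matrix.mem_unitaryGroup_iff'.mp hQ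
  have hSS : S * Sᴴ = 1 := by
    rw [hSdef, Matrix.conjTranspose_mul, Matrix.conjTranspose_conjTranspose]
    calc Pᴴ * Q * (Qᴴ * P) = Pᴴ * (Q * Qᴴ) * P := by simp only [Matrix.mul_assoc]
      _ = 1 := by rw [hQQ, Matrix.mul_one, hPP']
  have hSS' : Sᴴ * S = 1 := by
    rw [hSdef, Matrix.conjTranspose_mul, Matrix.conjTranspose_conjTranspose]
    calc Qᴴ * P * (Pᴴ * Q) = Qᴴ * (P * Pᴴ) * Q := by simp only [Matrix.mul_assoc]
      _ = 1 := by rw [hPP, Matrix.mul_one, hQQ']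
  -- the conjugated difference
  have hMN : Pᴴ * (M - N) * Q =
      diagonal (RCLike.ofReal ∘ α) * S - S * diagonal (RCLike.ofReal ∘ β) := by
    have hMeq : M = P * diagonal (RCLike.ofReal ∘ α) * Pᴴ := by
      rw [← Matrix.star_eq_conjTranspose]; exact hM.spectral_theorem
    have hNeq : N = Q * diagonal (RCLike.ofReal ∘ β) * Qᴴ := by
      rw [← Matrix.star_eq_conjTranspose]; exact hN.spectral_theorem
    rw [Matrix.mul_sub, Matrix.sub_mul]
    congr 1
    · conv_lhs => rw [hMeq]
      simp only [Matrix.mul_assoc]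
      rw [← Matrix.mul_assoc Pᴴ P, hPP', Matrix.one_mul]
    · conv_lhs => rw [hNeq]
      simp only [Matrix.mul_assoc]
      rw [hQQ', Matrix.mul_one, hSdef, Matrix.mul_assoc]
  -- entrywise formula
  have hsqF : sqF (M - N) = ∑ i, ∑ j, (α i - β j) ^ 2 * ‖S i j‖ ^ 2 := by
    rw [← sqF_unitary_conj (M - N) hP hQ, hMN]
    unfold sqF
    apply Finset.sum_congr rfl; intro i _
    apply Finset.sum_congr rfl; intro j _
    rw [Matrix.sub_apply, Matrix.diagonal_mul, Matrix.mul_diagonal]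
    have key : (RCLike.ofReal ∘ α) i * S i j - S i j * (RCLike.ofReal ∘ β) j
        = ((α i - β j : ℝ) : ℂ) * S i j := by
      simp only [Function.comp_apply,
        show (RCLike.ofReal : ℝ → ℂ) = Complex.ofReal from rfl]
      push_cast
      ring
    rw [key, norm_mul, Complex.norm_real, Real.norm_eq_abs, mul_pow, sq_abs]
  -- doubly stochastic matrix
  set D : Matrix (Fin n) (Fin n) ℝ := Matrix.of fun i j => ‖S i j‖ ^ 2 with hDdef
  have hDapp : ∀ i j, D i j = ‖S i j‖ ^ 2 := fun i j => rfl
  have hrow : ∀ i, ∑ j, D i j = 1 := by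
    intro i
    have h1 : (S * Sᴴ) i i = 1 := by rw [hSS, Matrix.one_apply_eq]
    rw [Matrix.mul_apply] at h1
    have h2 : ∀ j, S i j * Sᴴ j i = ((‖S i j‖ ^ 2 : ℝ) : ℂ) := by
      intro j
      rw [Matrix.conjTranspose_apply, Complex.star_def, Complex.mul_conj, ← Complex.sq_norm]
    rw [Finset.sum_congr rfl (fun j _ => h2 j)] at h1
    have h3 : ((∑ j, D i j : ℝ) : ℂ) = ((1 : ℝ) : ℂ) := by
      push_cast
      simp only [hDapp]
      exact h1
    exact_mod_cast h3
  have hcol : ∀ j, ∑ i, D i j = 1 := by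
    intro j
    have h1 : (Sᴴ * S) j j = 1 := by rw [hSS', Matrix.one_apply_eq]
    rw [Matrix.mul_apply] at h1
    have h2 : ∀ i, Sᴴ j i * S i j = ((‖S i j‖ ^ 2 : ℝ) : ℂ) := by
      intro i
      rw [Matrix.conjTranspose_apply, Complex.star_def,
        ← Complex.normSq_eq_conj_mul_self, ← Complex.sq_norm]
    rw [Finset.sum_congr rfl (fun i _ => h2 i)] at h1
    have h3 : ((∑ i, D i j : ℝ) : ℂ) = ((1 : ℝ) : ℂ) := by
      push_cast
      simp only [hDapp]
      exact h1
    exact_mod_cast h3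
  have hD : D ∈ doublyStochastic ℝ (Fin n) := by
    rw [mem_doublyStochastic_iff_sum]
    refine ⟨fun i j => ?_, hrow, hcol⟩
    rw [hDapp]
    positivity
  obtain ⟨w, hw0, hw1, hwD⟩ := exists_eq_sum_perm_of_mem_doublyStochastic hD
  set g : Equiv.Perm (Fin n) → ℝ := fun σ => ∑ i, (α i - β (σ i)) ^ 2 with hg
  have hDentry : ∀ i j, D i j = ∑ σ : Equiv.Perm (Fin n), w σ * σ.permMatrix ℝ i j := by
    intro i j
    conv_lhs => rw [← hwD]
    rw [Matrix.sum_apply]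
    apply Finset.sum_congr rfl
    intro σ _
    rw [Matrix.smul_apply, smul_eq_mul]
  have hperm : ∀ (σ : Equiv.Perm (Fin n)) (i j : Fin n),
      σ.permMatrix ℝ i j = if σ i = j then (1:ℝ) else 0 := by
    intro σ i j
    simp [Equiv.Perm.permMatrix, PEquiv.toMatrix_apply, Equiv.toPEquiv_apply]
  have hexp : sqF (M - N) = ∑ σ : Equiv.Perm (Fin n), w σ * g σ := by
    rw [hsqF]
    have swap1 : ∀ i : Fin n, ∑ j, ∑ σ : Equiv.Perm (Fin n),
        (α i - β j) ^ 2 * (w σ * σ.permMatrix ℝ i j)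
        = ∑ σ : Equiv.Perm (Fin n), ∑ j, (α i - β j) ^ 2 * (w σ * σ.permMatrix ℝ i j) :=
      fun i => Finset.sum_comm
    calc ∑ i, ∑ j, (α i - β j) ^ 2 * D i j
        = ∑ i, ∑ j, ∑ σ : Equiv.Perm (Fin n), (α i - β j) ^ 2 * (w σ * σ.permMatrix ℝ i j) := by
          apply Finset.sum_congr rfl; intro i _
          apply Finset.sum_congr rfl; intro j _
          rw [hDentry i j, Finset.mul_sum]
      _ = ∑ i, ∑ σ : Equiv.Perm (Fin n), ∑ j, (α i - β j) ^ 2 * (w σ * σ.permMatrix ℝ i j) :=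
          Finset.sum_congr rfl (fun i _ => swap1 i)
      _ = ∑ σ : Equiv.Perm (Fin n), ∑ i, ∑ j, (α i - β j) ^ 2 * (w σ * σ.permMatrix ℝ i j) :=
          Finset.sum_comm
      _ = ∑ σ : Equiv.Perm (Fin n), w σ * g σ := by
          apply Finset.sum_congr rfl; intro σ _
          rw [hg, Finset.mul_sum]
          apply Finset.sum_congr rfl; intro i _
          rw [Finset.sum_congr rfl (fun j _ => by rw [hperm σ i j])]
          simp [mul_ite]
          ring
  obtain ⟨σ₀, _, hσ₀⟩ := Finset.exists_min_image Finset.univ g ⟨1, Finset.mem_univ 1⟩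
  refine ⟨σ₀, ?_⟩
  have havg : g σ₀ = ∑ σ : Equiv.Perm (Fin n), w σ * g σ₀ := by
    rw [← Finset.sum_mul, hw1, one_mul]
  calc ∑ i, (α i - β (σ₀ i)) ^ 2 = g σ₀ := rfl
    _ = ∑ σ : Equiv.Perm (Fin n), w σ * g σ₀ := havg
    _ ≤ ∑ σ : Equiv.Perm (Fin n), w σ * g σ := by
        apply Finset.sum_le_sum
        intro σ _
        exact mul_le_mul_of_nonneg_left (hσ₀ σ (Finset.mem_univ σ)) (hw0 σ)
    _ = sqF (M - N) := hexp.symm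

end HWAux

/-- For `A`, `B` Hermitian and `f : ℝ → ℝ` 1-Lipschitz, the map
`U ↦ ∫ f dμ_{UAU* + B} = (1/n) ∑ f (λ_j(UAU* + B))` is `(2‖A‖_op/√n)`-Lipschitz on the
unitary group with the Hilbert–Schmidt distance. -/
theorem integral_spectralMeasure_randomized_sum_lipschitz (n : ℕ)
    (A B U V : Matrix (Fin n) (Fin n) ℂ)
    (hA : A.IsHermitian) (hB : B.IsHermitian)
    (hU : U ∈ Matrix.unitaryGroup (Fin n) ℂ) (hV : V ∈ Matrix.unitaryGroup (Fin n) ℂ)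
    (f : ℝ → ℝ) (hf : LipschitzWith 1 f)
    (hMU : (U * A * Uᴴ + B).IsHermitian) (hMV : (V * A * Vᴴ + B).IsHermitian) :
    |(1 / n : ℝ) * ∑ j, f (hMU.eigenvalues j) - (1 / n : ℝ) * ∑ j, f (hMV.eigenvalues j)| ≤
      (2 * opNorm A / Real.sqrt n) * hsNorm (U - V) := by
  classical
  rcases Nat.eq_zero_or_pos n with h0 | hn
  · subst h0
    simp [hsNorm]
  obtain ⟨σ, hσ⟩ := HWAux.hoffman_wielandt (U * A * Uᴴ + B) (V * A * Vᴴ + B) hMU hMV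
  set α := hMU.eigenvalues with hαdef
  set β := hMV.eigenvalues with hβdef
  have hn' : (0:ℝ) < n := by exact_mod_cast hn
  -- HS norm of the difference
  have hdiff : (U * A * Uᴴ + B) - (V * A * Vᴴ + B) = (U - V) * (A * Uᴴ) + V * (A * (U - V)ᴴ) := by
    rw [Matrix.conjTranspose_sub]
    noncomm_ring
  have hb1 : hsNorm ((U - V) * (A * Uᴴ)) ≤ opNorm A * hsNorm (U - V) := by
    rw [← Matrix.mul_assoc]
    calc hsNorm ((U - V) * A * Uᴴ) ≤ hsNorm ((U - V) * A) * opNorm Uᴴ :=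
          HWAux.hsNorm_mul_le_right _ _
      _ ≤ hsNorm ((U - V) * A) * 1 := by
          apply mul_le_mul_of_nonneg_left _ (HWAux.hsNorm_nonneg _)
          rw [HWAux.opNorm_conjTranspose]
          exact HWAux.opNorm_unitary_le hU
      _ = hsNorm ((U - V) * A) := mul_one _
      _ ≤ hsNorm (U - V) * opNorm A := HWAux.hsNorm_mul_le_right _ _
      _ = opNorm A * hsNorm (U - V) := mul_comm _ _
  have hb2 : hsNorm (V * (A * (U - V)ᴴ)) ≤ opNorm A * hsNorm (U - V) := by
    calc hsNorm (V * (A * (U - V)ᴴ)) ≤ opNorm V * hsNorm (A * (U - V)ᴴ) :=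
          HWAux.hsNorm_mul_le_left _ _
      _ ≤ 1 * hsNorm (A * (U - V)ᴴ) :=
          mul_le_mul_of_nonneg_right (HWAux.opNorm_unitary_le hV) (HWAux.hsNorm_nonneg _)
      _ = hsNorm (A * (U - V)ᴴ) := one_mul _
      _ ≤ opNorm A * hsNorm ((U - V)ᴴ) := HWAux.hsNorm_mul_le_left _ _
      _ = opNorm A * hsNorm (U - V) := by rw [HWAux.hsNorm_conjTranspose]
  have hMNle : hsNorm ((U * A * Uᴴ + B) - (V * A * Vᴴ + B)) ≤
      2 * opNorm A * hsNorm (U - V) := by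
    rw [hdiff]
    calc hsNorm ((U - V) * (A * Uᴴ) + V * (A * (U - V)ᴴ))
        ≤ hsNorm ((U - V) * (A * Uᴴ)) + hsNorm (V * (A * (U - V)ᴴ)) :=
          HWAux.hsNorm_add_le _ _
      _ ≤ opNorm A * hsNorm (U - V) + opNorm A * hsNorm (U - V) := add_le_add hb1 hb2
      _ = 2 * opNorm A * hsNorm (U - V) := by ring
  -- eigenvalue sums
  have hsum1 : ∑ j, f (β j) = ∑ i, f (β (σ i)) := (Equiv.sum_comp σ fun j => f (β j)).symm
  have habs : |∑ i, (f (α i) - f (β (σ i)))| ≤ ∑ i, |α i - β (σ i)| := by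
    calc |∑ i, (f (α i) - f (β (σ i)))| ≤ ∑ i, |f (α i) - f (β (σ i))| :=
          Finset.abs_sum_le_sum_abs _ _
      _ ≤ ∑ i, |α i - β (σ i)| := by
          apply Finset.sum_le_sum
          intro i _
          have := hf.dist_le_mul (α i) (β (σ i))
          simpa [Real.dist_eq] using this
  have hcs : ∑ i, |α i - β (σ i)| ≤
      Real.sqrt n * Real.sqrt (∑ i, (α i - β (σ i)) ^ 2) := by
    have h1 : (∑ i, |α i - β (σ i)|) ^ 2 ≤ (n : ℝ) * ∑ i, (α i - β (σ i)) ^ 2 := by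
      have := sq_sum_le_card_mul_sum_sq (s := (Finset.univ : Finset (Fin n)))
        (f := fun i => |α i - β (σ i)|)
      simpa [sq_abs] using this
    have h2 : ∑ i, |α i - β (σ i)| = Real.sqrt ((∑ i, |α i - β (σ i)|) ^ 2) :=
      (Real.sqrt_sq (Finset.sum_nonneg fun i _ => abs_nonneg _)).symm
    rw [h2, ← Real.sqrt_mul (by positivity)]
    exact Real.sqrt_le_sqrt h1
  have hsqrt : Real.sqrt (∑ i, (α i - β (σ i)) ^ 2) ≤
      hsNorm ((U * A * Uᴴ + B) - (V * A * Vᴴ + B)) := by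
    rw [HWAux.hsNorm_eq]
    exact Real.sqrt_le_sqrt hσ
  have key : |(1 / n : ℝ) * ∑ j, f (α j) - (1 / n : ℝ) * ∑ j, f (β j)| =
      (1 / n : ℝ) * |∑ i, (f (α i) - f (β (σ i)))| := by
    rw [hsum1, ← mul_sub, ← Finset.sum_sub_distrib, abs_mul, abs_of_nonneg (by positivity : (0:ℝ) ≤ 1 / n)]
  have harith : (1 / (n:ℝ)) * (Real.sqrt n * (2 * opNorm A * hsNorm (U - V))) =
      2 * opNorm A / Real.sqrt n * hsNorm (U - V) := by
    have hsq : Real.sqrt n * Real.sqrt n = (n:ℝ) := Real.mul_self_sqrt hn'.le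
    have hs0 : Real.sqrt (n:ℝ) ≠ 0 := by positivity
    field_simp
    linear_combination (opNorm A * hsNorm (U - V)) * hsq
  calc |(1 / n : ℝ) * ∑ j, f (α j) - (1 / n : ℝ) * ∑ j, f (β j)|
      = (1 / n : ℝ) * |∑ i, (f (α i) - f (β (σ i)))| := key
    _ ≤ (1 / n : ℝ) * ∑ i, |α i - β (σ i)| :=
        mul_le_mul_of_nonneg_left habs (by positivity)
    _ ≤ (1 / n : ℝ) * (Real.sqrt n * Real.sqrt (∑ i, (α i - β (σ i)) ^ 2)) :=
        mul_le_mul_of_nonneg_left hcs (by positivity)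
    _ ≤ (1 / n : ℝ) * (Real.sqrt n * hsNorm ((U * A * Uᴴ + B) - (V * A * Vᴴ + B))) := by
        apply mul_le_mul_of_nonneg_left _ (by positivity)
        exact mul_le_mul_of_nonneg_left hsqrt (Real.sqrt_nonneg _)
    _ ≤ (1 / n : ℝ) * (Real.sqrt n * (2 * opNorm A * hsNorm (U - V))) := by
        apply mul_le_mul_of_nonneg_left _ (by positivity)
        exact mul_le_mul_of_nonneg_left hMNle (Real.sqrt_nonneg _)
    _ = 2 * opNorm A / Real.sqrt n * hsNorm (U - V) := harith
end
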